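/- Divergence formula for affine vector fields on a triangle: let K ⊂ ℝ² be a nondegenerate triangle with area |K|, edges σ₁, σ₂, σ₃ of lengths |σ_i|, edge midpoints x_{σ_i}, and outward unit normals n_i. Then for every affine map v: ℝ² → ℝ², whose divergence div v is a constant, one has |K| div v = ∑_{i=1}^3 |σ_i| v(x_{σ_i})·n_i. -/

import Mathlib

open scoped RealInnerProductSpace
open MeasureTheory

noncomputable section

/-- The Euclidean plane. -/
abbrev E2 : Type := EuclideanSpace ℝ (Fin 2)

open Set intervalIntegral Pointwise

section Aux



lemma null_line_vert (c : ℝ) : volume {p : ℝ × ℝ | p.1 = c} = 0 := by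
  have : {p : ℝ × ℝ | p.1 = c} = ({c} : Set ℝ) ×ˢ (univ : Set ℝ) := by
    ext p; constructor
    · rintro h; exact ⟨h, trivial⟩
    · rintro ⟨h, -⟩; exact h
  rw [this, Measure.volume_eq_prod, Measure.prod_prod]
  simp

lemma null_line_horiz (c : ℝ) : volume {p : ℝ × ℝ | p.2 = c} = 0 := by
  have : {p : ℝ × ℝ | p.2 = c} = (univ : Set ℝ) ×ˢ ({c} : Set ℝ) := by
    ext p; constructor
    · rintro h; exact ⟨trivial, h⟩
    · rintro ⟨-, h⟩; exact h
  rw [this, Measure.volume_eq_prod, Measure.prod_prod]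
  simp

lemma null_line_diag : volume {p : ℝ × ℝ | p.1 + p.2 = 1} = 0 := by
  have h : {p : ℝ × ℝ | p.1 + p.2 = 1} ⊆
      (AffineSubspace.mk' ((1:ℝ), (0:ℝ))
        (LinearMap.ker ((LinearMap.fst ℝ ℝ ℝ) + (LinearMap.snd ℝ ℝ ℝ))) : Set (ℝ × ℝ)) := by
    intro p hp
    refine AffineSubspace.mem_mk'.2 ?_
    simp only [LinearMap.mem_ker, vsub_eq_sub, LinearMap.add_apply, LinearMap.fst_apply,
      LinearMap.snd_apply, Prod.fst_sub, Prod.snd_sub]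
    have := hp
    simp only [mem_setOf_eq] at this
    linarith
  refine measure_mono_null h ?_
  apply Measure.addHaar_affineSubspace
  intro htop
  have h1 : ((1:ℝ),(1:ℝ)) ∈ (AffineSubspace.mk' ((1:ℝ), (0:ℝ))
        (LinearMap.ker ((LinearMap.fst ℝ ℝ ℝ) + (LinearMap.snd ℝ ℝ ℝ))) : AffineSubspace ℝ (ℝ × ℝ)) := by
    rw [htop]; trivial
  rw [AffineSubspace.mem_mk'] at h1
  simp at h1

lemma volume_stdTri2 :
    volume {p : ℝ × ℝ | 0 ≤ p.1 ∧ 0 ≤ p.2 ∧ p.1 + p.2 ≤ 1} = ENNReal.ofReal (1/2) := by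
  set S := {p : ℝ × ℝ | 0 ≤ p.1 ∧ 0 ≤ p.2 ∧ p.1 + p.2 ≤ 1} with hS
  set R := regionBetween (fun _ : ℝ => (0:ℝ)) (fun x => 1 - x) (Ioo 0 1) with hR
  have hvolR : volume R = ENNReal.ofReal (1/2) := by
    have f_int : IntegrableOn (fun _ : ℝ => (0:ℝ)) (Ioo 0 1) volume :=
      integrableOn_const (by simp) (by simp)
    have g_int : IntegrableOn (fun x : ℝ => 1 - x) (Ioo 0 1) volume :=
      ((continuous_const.sub continuous_id).integrableOn_Icc (a := 0) (b := 1)).mono_set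
        Ioo_subset_Icc_self
    have hfg : ∀ x ∈ Ioo (0:ℝ) 1, (fun _ : ℝ => (0:ℝ)) x ≤ (fun x : ℝ => 1 - x) x := by
      rintro x ⟨-, hx⟩; simp; linarith
    have := volume_regionBetween_eq_integral f_int g_int measurableSet_Ioo hfg
    rw [Measure.volume_eq_prod, hR, this]
    congr 1
    have h2 : ∀ y ∈ Ioo (0:ℝ) 1,
        ((fun x : ℝ => 1 - x) - (fun _ : ℝ => (0:ℝ)) : ℝ → ℝ) y = 1 - y := by
      intro y _; simp [Pi.sub_apply]
    rw [MeasureTheory.setIntegral_congr_fun measurableSet_Ioo h2,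
      ← MeasureTheory.integral_Ioc_eq_integral_Ioo,
      ← integral_of_le (by norm_num : (0:ℝ) ≤ 1)]
    rw [integral_sub intervalIntegrable_const intervalIntegrable_id, integral_id, intervalIntegral.integral_const]
    norm_num
  have hRS : R ⊆ S := by
    rintro p ⟨h1, h2⟩
    simp only [mem_Ioo] at h1 h2
    exact ⟨le_of_lt h1.1, le_of_lt h2.1, by linarith [h2.2]⟩
  have hSR : S ⊆ R ∪ ({p : ℝ × ℝ | p.1 = 0} ∪ {p : ℝ × ℝ | p.2 = 0} ∪ {p : ℝ × ℝ | p.1 + p.2 = 1}) := by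
    rintro p ⟨h1, h2, h3⟩
    rcases eq_or_lt_of_le h1 with h|h
    · exact Or.inr (Or.inl (Or.inl h.symm))
    rcases eq_or_lt_of_le h2 with h'|h'
    · exact Or.inr (Or.inl (Or.inr h'.symm))
    rcases eq_or_lt_of_le h3 with h''|h''
    · exact Or.inr (Or.inr h'')
    · refine Or.inl ⟨⟨h, by linarith⟩, ?_⟩
      simp only [mem_Ioo]
      exact ⟨h', by linarith⟩
  have hN : volume ({p : ℝ × ℝ | p.1 = 0} ∪ {p : ℝ × ℝ | p.2 = 0} ∪ {p : ℝ × ℝ | p.1 + p.2 = 1}) = 0 := by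
    refine measure_union_null (measure_union_null ?_ ?_) ?_
    · exact null_line_vert 0
    · exact null_line_horiz 0
    · exact null_line_diag
  refine le_antisymm ?_ ?_
  · calc volume S ≤ volume (R ∪ _) := measure_mono hSR
      _ ≤ volume R + _ := measure_union_le _ _
      _ = ENNReal.ofReal (1/2) := by rw [hvolR, hN, add_zero]
  · rw [← hvolR]; exact measure_mono hRS


lemma volume_stdTriE2 :
    volume {x : E2 | 0 ≤ x 0 ∧ 0 ≤ x 1 ∧ x 0 + x 1 ≤ 1} = ENNReal.ofReal (1/2) := by
  have mp := (volume_preserving_finTwoArrow ℝ).comp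
    (EuclideanSpace.volume_preserving_symm_measurableEquiv_toLp (Fin 2))
  have hm : MeasurableSet {p : ℝ × ℝ | 0 ≤ p.1 ∧ 0 ≤ p.2 ∧ p.1 + p.2 ≤ 1} := by
    have : IsClosed {p : ℝ × ℝ | 0 ≤ p.1 ∧ 0 ≤ p.2 ∧ p.1 + p.2 ≤ 1} := by
      have h1 : IsClosed {p : ℝ × ℝ | 0 ≤ p.1} := isClosed_le continuous_const continuous_fst
      have h2 : IsClosed {p : ℝ × ℝ | 0 ≤ p.2} := isClosed_le continuous_const continuous_snd
      have h3 : IsClosed {p : ℝ × ℝ | p.1 + p.2 ≤ 1} :=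
        isClosed_le (continuous_fst.add continuous_snd) continuous_const
      exact h1.inter (h2.inter h3)
    exact this.measurableSet
  have key := mp.measure_preimage hm.nullMeasurableSet
  have hpre : (⇑(MeasurableEquiv.finTwoArrow) ∘ ⇑(MeasurableEquiv.toLp 2 (Fin 2 → ℝ)).symm) ⁻¹'
      {p : ℝ × ℝ | 0 ≤ p.1 ∧ 0 ≤ p.2 ∧ p.1 + p.2 ≤ 1}
      = {x : E2 | 0 ≤ x 0 ∧ 0 ≤ x 1 ∧ x 0 + x 1 ≤ 1} := rfl
  rw [hpre] at key
  rw [key, volume_stdTri2]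

lemma convexHull_stdTri :
    convexHull ℝ {(0:E2), EuclideanSpace.single 0 (1:ℝ), EuclideanSpace.single 1 (1:ℝ)}
      = {x : E2 | 0 ≤ x 0 ∧ 0 ≤ x 1 ∧ x 0 + x 1 ≤ 1} := by
  apply le_antisymm
  · apply convexHull_min
    · rintro p (rfl | rfl | rfl)
      · simp
      · simp [EuclideanSpace.single_apply]
      · simp [EuclideanSpace.single_apply]
    · intro x hx y hy a b ha hb hab
      have hax : ∀ j, (a • x + b • y : E2) j = a * x j + b * y j := fun j => rfl
      obtain ⟨hx0, hx1, hx2⟩ := hx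
      obtain ⟨hy0, hy1, hy2⟩ := hy
      refine ⟨?_, ?_, ?_⟩ <;> rw [hax] <;> try rw [hax]
      · positivity
      · positivity
      · nlinarith
  · rintro x ⟨hx0, hx1, hx2⟩
    set s := x 0 + x 1 with hs
    rcases eq_or_lt_of_le (by positivity : (0:ℝ) ≤ s) with h | h
    · have hx00 : x 0 = 0 := by linarith
      have hx10 : x 1 = 0 := by linarith
      have : x = 0 := by
        ext j; fin_cases j <;> simpa [hx00, hx10]
      rw [this]
      exact subset_convexHull ℝ _ (by simp)
    · set z : E2 := (x 0 / s) • EuclideanSpace.single 0 (1:ℝ)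
        + (x 1 / s) • EuclideanSpace.single 1 (1:ℝ) with hz
      have hzmem : z ∈ convexHull ℝ
          {(0:E2), EuclideanSpace.single 0 (1:ℝ), EuclideanSpace.single 1 (1:ℝ)} := by
        apply convexHull_mono (Set.subset_insert _ _)
        rw [convexHull_pair]
        exact ⟨x 0 / s, x 1 / s, by positivity, by positivity, by field_simp; exact hs.symm, rfl⟩
      have h0mem : (0:E2) ∈ convexHull ℝ
          {(0:E2), EuclideanSpace.single 0 (1:ℝ), EuclideanSpace.single 1 (1:ℝ)} :=
        subset_convexHull ℝ _ (by simp)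
      have hxeq : x = (1 - s) • (0:E2) + s • z := by
        ext j
        have : ((1 - s) • (0:E2) + s • z) j = (1-s) * 0 + s * ((x 0 / s) * (EuclideanSpace.single 0 (1:ℝ)) j + (x 1 / s) * (EuclideanSpace.single 1 (1:ℝ)) j) := rfl
        rw [this]
        fin_cases j <;> simp [EuclideanSpace.single_apply] <;> field_simp
      rw [hxeq]
      exact (convex_convexHull ℝ _) h0mem hzmem (by linarith) (le_of_lt h) (by ring)

lemma volume_triangle (p0 p1 p2 : E2) :
    volume (convexHull ℝ {p0, p1, p2}) =
      ENNReal.ofReal (|(p1 0 - p0 0) * (p2 1 - p0 1) - (p1 1 - p0 1) * (p2 0 - p0 0)| / 2) := by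
  set M : Matrix (Fin 2) (Fin 2) ℝ :=
    !![p1 0 - p0 0, p2 0 - p0 0; p1 1 - p0 1, p2 1 - p0 1] with hM
  set L : E2 →ₗ[ℝ] E2 := Matrix.toEuclideanLin M with hL
  have hdet : LinearMap.det L = (p1 0 - p0 0) * (p2 1 - p0 1) - (p1 1 - p0 1) * (p2 0 - p0 0) := by
    rw [hL, Matrix.toEuclideanLin_eq_toLin, LinearMap.det_toLin, hM, Matrix.det_fin_two_of]
    ring
  have hLu0 : L (EuclideanSpace.single 0 (1:ℝ)) = p1 - p0 := by
    ext j
    have : (L (EuclideanSpace.single 0 (1:ℝ))) j = ∑ k, M j k * (EuclideanSpace.single 0 (1:ℝ)) k := rfl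
    rw [this, Fin.sum_univ_two]
    fin_cases j <;> simp [hM, EuclideanSpace.single_apply] <;> rfl
  have hLu1 : L (EuclideanSpace.single 1 (1:ℝ)) = p2 - p0 := by
    ext j
    have : (L (EuclideanSpace.single 1 (1:ℝ))) j = ∑ k, M j k * (EuclideanSpace.single 1 (1:ℝ)) k := rfl
    rw [this, Fin.sum_univ_two]
    fin_cases j <;> simp [hM, EuclideanSpace.single_apply] <;> rfl
  have himg : convexHull ℝ {p0, p1, p2}
      = p0 +ᵥ (L '' (convexHull ℝ {(0:E2), EuclideanSpace.single 0 (1:ℝ), EuclideanSpace.single 1 (1:ℝ)})) := by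
    rw [L.image_convexHull, ← convexHull_vadd]
    congr 1
    rw [Set.image_insert_eq, Set.image_insert_eq, Set.image_singleton,
      map_zero, hLu0, hLu1]
    have h1 : p0 +ᵥ ({0, p1 - p0, p2 - p0} : Set E2) = {p0, p1, p2} := by
      rw [← Set.image_vadd, Set.image_insert_eq, Set.image_insert_eq, Set.image_singleton]
      simp only [vadd_eq_add]
      congr 1
      · abel
      congr 1
      · abel
      congr 1
      abel
    rw [h1]
  rw [himg, measure_vadd, Measure.addHaar_image_linearMap, convexHull_stdTri, volume_stdTriE2,
    hdet, ← ENNReal.ofReal_mul (abs_nonneg _)]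
  ring_nf


lemma cross_sq (d0 d1 n0 n1 : ℝ) (hn : n0^2+n1^2 = 1) (ho : n0*d0+n1*d1 = 0) :
    (d0*n1 - d1*n0)^2 = d0^2 + d1^2 := by
  linear_combination (d0^2+d1^2)*hn - (n0*d0+n1*d1)*ho

lemma cross_key (d0 d1 n0 n1 w0 w1 : ℝ) (hn : n0^2+n1^2 = 1) (ho : n0*d0+n1*d1 = 0) :
    (d0*n1 - d1*n0) * (w0*n0 + w1*n1) = d0*w1 - d1*w0 := by
  linear_combination (d0*w1-d1*w0)*hn - (n0*w1 - n1*w0)*ho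

lemma edge_helper (d0 d1 n0 n1 w0 w1 u0 u1 : ℝ)
    (hd : d0^2 + d1^2 ≠ 0) (hn : n0^2+n1^2 = 1) (ho : n0*d0+n1*d1 = 0)
    (hu : 0 < n0*u0 + n1*u1) :
    |d0*u1 - d1*u0| * (Real.sqrt (d0^2+d1^2) * (w0*n0 + w1*n1))
      = (d0*u1 - d1*u0) * (d0*w1 - d1*w0) := by
  set q := d0*n1 - d1*n0 with hq
  have hq2 : q^2 = d0^2 + d1^2 := cross_sq d0 d1 n0 n1 hn ho
  have hqne : q ≠ 0 := by
    intro h; rw [h] at hq2; simp at hq2; exact hd hq2.symm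
  have hsqrt : Real.sqrt (d0^2+d1^2) = |q| := by rw [← hq2, Real.sqrt_sq_eq_abs]
  have hkw : q * (w0*n0 + w1*n1) = d0*w1 - d1*w0 := cross_key _ _ _ _ _ _ hn ho
  have hku : q * (u0*n0 + u1*n1) = d0*u1 - d1*u0 := cross_key _ _ _ _ _ _ hn ho
  have habsD : |d0*u1 - d1*u0| = |q| * (n0*u0 + n1*u1) := by
    rw [← hku, abs_mul]
    have : |u0 * n0 + u1 * n1| = n0*u0 + n1*u1 := by
      rw [abs_of_pos (by linarith [hu] : (0:ℝ) < u0*n0+u1*n1)]; ring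
    rw [this]
  rw [habsD, hsqrt]
  have h1 : |q| * |q| = q * q := by rw [← abs_mul, abs_mul_self]
  calc |q| * (n0*u0 + n1*u1) * (|q| * (w0*n0 + w1*n1))
      = (|q| * |q|) * ((n0*u0 + n1*u1) * (w0*n0 + w1*n1)) := by ring
    _ = (q * (u0*n0 + u1*n1)) * (q * (w0*n0 + w1*n1)) := by rw [h1]; ring
    _ = (d0*u1 - d1*u0) * (d0*w1 - d1*w0) := by rw [hkw, hku]


lemma inner_coord (x y : E2) : ⟪x, y⟫ = x 0 * y 0 + x 1 * y 1 := by
  simp [PiLp.inner_apply, RCLike.inner_apply, Fin.sum_univ_two]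
  ring

lemma dist_coord (x y : E2) : dist x y = Real.sqrt ((x 0 - y 0)^2 + (x 1 - y 1)^2) := by
  rw [EuclideanSpace.dist_eq, Fin.sum_univ_two]
  congr 1
  · congr 1 <;> rw [Real.dist_eq, sq_abs]

lemma mid_coord (x y : E2) (j : Fin 2) : (midpoint ℝ x y) j = (x j + y j)/2 := by
  rw [midpoint_eq_smul_add]
  show (2⁻¹ : ℝ) * (x j + y j) = _
  ring

lemma decomp (x : E2) :
    x = x 0 • EuclideanSpace.single 0 (1:ℝ) + x 1 • EuclideanSpace.single 1 (1:ℝ) := by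
  ext j; fin_cases j <;> simp [EuclideanSpace.single_apply]

lemma linmap_coord (A : E2 →ₗ[ℝ] E2) (x : E2) (j : Fin 2) :
    (A x) j = x 0 * (A (EuclideanSpace.single 0 1)) j + x 1 * (A (EuclideanSpace.single 1 1)) j := by
  conv_lhs => rw [decomp x]
  rw [map_add, _root_.map_smul, _root_.map_smul]
  simp

lemma trace_coord (A : E2 →ₗ[ℝ] E2) :
    LinearMap.trace ℝ E2 A
      = (A (EuclideanSpace.single 0 1)) 0 + (A (EuclideanSpace.single 1 1)) 1 := by
  rw [LinearMap.trace_eq_matrix_trace ℝ (PiLp.basisFun 2 ℝ (Fin 2)), Matrix.trace,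
    Fin.sum_univ_two]
  rw [Matrix.diag_apply, Matrix.diag_apply, LinearMap.toMatrix_apply, LinearMap.toMatrix_apply]
  rw [PiLp.basisFun_repr, PiLp.basisFun_repr, PiLp.basisFun_apply, PiLp.basisFun_apply]

lemma sub_coord (x y : E2) (j : Fin 2) : (x - y) j = x j - y j := rfl

lemma nsq_one (n : E2) (h : ‖n‖ = 1) : n 0 ^ 2 + n 1 ^ 2 = 1 := by
  have := real_inner_self_eq_norm_sq n
  rw [inner_coord, h] at this
  nlinarith [this]

lemma edge_term (P Q R n w : E2) (hQR : Q ≠ R) (hn : ‖n‖ = 1)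
    (ho : ⟪n, Q - R⟫ = 0) (hu : 0 < ⟪n, midpoint ℝ Q R - P⟫)
    (D : ℝ)
    (hD : D = (Q 0 - R 0) * ((Q 1 + R 1)/2 - P 1) - (Q 1 - R 1) * ((Q 0 + R 0)/2 - P 0)) :
    D ≠ 0 ∧
      |D| * (dist Q R * ⟪w, n⟫) = D * ((Q 0 - R 0) * w 1 - (Q 1 - R 1) * w 0) := by
  have hd : (Q 0 - R 0)^2 + (Q 1 - R 1)^2 ≠ 0 := by
    intro h
    apply hQR
    have h0 : Q 0 - R 0 = 0 := by nlinarith [sq_nonneg (Q 0 - R 0), sq_nonneg (Q 1 - R 1)]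
    have h1 : Q 1 - R 1 = 0 := by nlinarith [sq_nonneg (Q 0 - R 0), sq_nonneg (Q 1 - R 1)]
    ext j; fin_cases j
    · show Q 0 = R 0; linarith
    · show Q 1 = R 1; linarith
  have hn' : n 0 ^ 2 + n 1 ^ 2 = 1 := nsq_one n hn
  have ho' : n 0 * (Q 0 - R 0) + n 1 * (Q 1 - R 1) = 0 := by
    rw [inner_coord] at ho
    simp only [sub_coord] at ho
    linarith
  have hu' : 0 < n 0 * ((Q 0 + R 0)/2 - P 0) + n 1 * ((Q 1 + R 1)/2 - P 1) := by
    rw [inner_coord] at hu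
    simp only [sub_coord, mid_coord] at hu
    linarith
  constructor
  · rw [hD]
    have hck := cross_key (Q 0 - R 0) (Q 1 - R 1) (n 0) (n 1)
      (((Q 0 + R 0)/2 - P 0)) (((Q 1 + R 1)/2 - P 1)) hn' ho'
    have : (Q 0 - R 0) * ((Q 1 + R 1)/2 - P 1) - (Q 1 - R 1) * ((Q 0 + R 0)/2 - P 0)
        = ((Q 0 - R 0) * n 1 - (Q 1 - R 1) * n 0)
          * (((Q 0 + R 0)/2 - P 0) * n 0 + ((Q 1 + R 1)/2 - P 1) * n 1) := hck.symm
    rw [this]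
    apply mul_ne_zero
    · intro hq0
      apply hd
      rw [← cross_sq (Q 0 - R 0) (Q 1 - R 1) (n 0) (n 1) hn' ho', hq0]
      ring
    · have : (0:ℝ) < ((Q 0 + R 0)/2 - P 0) * n 0 + ((Q 1 + R 1)/2 - P 1) * n 1 := by linarith
      exact this.ne'
  · rw [dist_coord, inner_coord, hD]
    exact edge_helper (Q 0 - R 0) (Q 1 - R 1) (n 0) (n 1) (w 0) (w 1)
      (((Q 0 + R 0)/2 - P 0)) (((Q 1 + R 1)/2 - P 1)) hd hn' ho' hu'

end Aux

/-- A nondegenerate triangle of the plane, given by its three affinely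
independent vertices.  Its edge `σ_i` joins the vertices `vtx (i+1)` and `vtx (i+2)`. -/
structure Tri : Type where
  vtx : Fin 3 → E2
  indep : AffineIndependent ℝ vtx

/-- The triangle as a subset of the plane: the convex hull of its vertices. -/
def Tri.carrier (t : Tri) : Set E2 := convexHull ℝ (Set.range t.vtx)

/-- The area `|K|` of the triangle. -/
def Tri.area (t : Tri) : ℝ := (volume t.carrier).toReal

/-- **Divergence formula for affine vector fields on a triangle**: for a nondegenerate
triangle `K` with edges `σ_i` (of length `|σ_i|`, midpoint `x_{σ_i}` and outward unit
normal `n_i`, the unit normal of the edge pointing away from the opposite vertex) and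
every affine map `v(x) = A x + b` (whose divergence is `trace A`), one has
`|K| div v = ∑ i, |σ_i| v(x_{σ_i})·n_i`. -/
theorem affine_divergence_formula
    (t : Tri) (nrm : Fin 3 → E2)
    (hunit : ∀ i, ‖nrm i‖ = 1)
    (horth : ∀ i, ⟪nrm i, t.vtx (i + 1) - t.vtx (i + 2)⟫ = 0)
    (hout : ∀ i, 0 < ⟪nrm i, midpoint ℝ (t.vtx (i + 1)) (t.vtx (i + 2)) - t.vtx i⟫)
    (A : E2 →ₗ[ℝ] E2) (b : E2) (v : E2 → E2) (hv : ∀ x, v x = A x + b) :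
    t.area * LinearMap.trace ℝ E2 A = ∑ i : Fin 3,
      dist (t.vtx (i + 1)) (t.vtx (i + 2)) *
        ⟪v (midpoint ℝ (t.vtx (i + 1)) (t.vtx (i + 2))), nrm i⟫ := by
  have hinj := t.indep.injective
  have h12 : t.vtx 1 ≠ t.vtx 2 := fun h => absurd (hinj h) (by decide)
  have h20 : t.vtx 2 ≠ t.vtx 0 := fun h => absurd (hinj h) (by decide)
  have h01 : t.vtx 0 ≠ t.vtx 1 := fun h => absurd (hinj h) (by decide)
  obtain ⟨D, hDdef⟩ : ∃ D : ℝ, D = (t.vtx 1 0 - t.vtx 0 0) * (t.vtx 2 1 - t.vtx 0 1)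
      - (t.vtx 1 1 - t.vtx 0 1) * (t.vtx 2 0 - t.vtx 0 0) := ⟨_, rfl⟩
  have hrange : Set.range t.vtx = {t.vtx 0, t.vtx 1, t.vtx 2} := by
    ext x; constructor
    · rintro ⟨i, rfl⟩; fin_cases i <;> simp
    · rintro (rfl|rfl|rfl)
      · exact ⟨0, rfl⟩
      · exact ⟨1, rfl⟩
      · exact ⟨2, rfl⟩
  have harea : t.area = |D| / 2 := by
    rw [Tri.area, Tri.carrier, hrange, volume_triangle,
      ENNReal.toReal_ofReal (by positivity), hDdef]
  have e01 : (0:Fin 3) + 1 = 1 := by decide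
  have e02 : (0:Fin 3) + 2 = 2 := by decide
  have e11 : (1:Fin 3) + 1 = 2 := by decide
  have e12 : (1:Fin 3) + 2 = 0 := by decide
  have e21 : (2:Fin 3) + 1 = 0 := by decide
  have e22 : (2:Fin 3) + 2 = 1 := by decide
  obtain ⟨hD0, H0⟩ := edge_term (t.vtx 0) (t.vtx 1) (t.vtx 2) (nrm 0)
    (v (midpoint ℝ (t.vtx 1) (t.vtx 2))) h12 (hunit 0)
    (by have := horth 0; rwa [e01, e02] at this)
    (by have := hout 0; rwa [e01, e02] at this)
    D (by rw [hDdef]; ring)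
  obtain ⟨hD1, H1⟩ := edge_term (t.vtx 1) (t.vtx 2) (t.vtx 0) (nrm 1)
    (v (midpoint ℝ (t.vtx 2) (t.vtx 0))) h20 (hunit 1)
    (by have := horth 1; rwa [e11, e12] at this)
    (by have := hout 1; rwa [e11, e12] at this)
    D (by rw [hDdef]; ring)
  obtain ⟨hD2, H2⟩ := edge_term (t.vtx 2) (t.vtx 0) (t.vtx 1) (nrm 2)
    (v (midpoint ℝ (t.vtx 0) (t.vtx 1))) h01 (hunit 2)
    (by have := horth 2; rwa [e21, e22] at this)
    (by have := hout 2; rwa [e21, e22] at this)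
    D (by rw [hDdef]; ring)
  have hw : ∀ (x y : E2) (j : Fin 2), v (midpoint ℝ x y) j
      = ((x 0 + y 0)/2) * (A (EuclideanSpace.single 0 1)) j
        + ((x 1 + y 1)/2) * (A (EuclideanSpace.single 1 1)) j + b j := by
    intro x y j
    rw [hv]
    show (A (midpoint ℝ x y)) j + b j = _
    rw [linmap_coord, mid_coord, mid_coord]
  rw [Fin.sum_univ_three]
  simp only [e01, e02, e11, e12, e21, e22]
  refine mul_left_cancel₀ (abs_ne_zero.mpr hD0) ?_
  rw [harea, trace_coord]
  conv_rhs => rw [mul_add, mul_add]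
  rw [H0, H1, H2]
  simp only [hw]
  have hsq : |D| * |D| = D * D := by rw [← abs_mul, abs_mul_self]
  linear_combination (((A (EuclideanSpace.single 0 1)) 0 + (A (EuclideanSpace.single 1 1)) 1) / 2) * hsq
    + (D * ((A (EuclideanSpace.single 0 1)) 0 + (A (EuclideanSpace.single 1 1)) 1) / 2) * hDdef

end
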